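/- Newton–Picard zero detection without quadratic estimates: suppose x₁ ∈ X satisfies ‖x₁ − x₀‖ < δ/8 and ‖f(x₁)‖ < δ/(4c). Then there exists a unique x ∈ X such that f(x) = 0, x − x₁ lies in the range of Q, and ‖x − x₀‖ < δ. Moreover this x satisfies ‖x − x₁‖ ≤ 2c·‖f(x₁)‖. -/

import Mathlib

/-- **Newton–Picard zero detection without quadratic estimates**
(McDuff–Salamon, Proposition A.3.4).  Let `X`, `Y` be Banach spaces, `U ⊆ X`
open, `f : U → Y` continuously differentiable (with derivative `f'`), `x₀ ∈ U`
with `D := df(x₀)` surjective admitting a bounded right inverse `Q` with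
`‖Q‖ ≤ c`, `B_δ(x₀) ⊆ U`, and `‖df(x) - D‖ ≤ 1/(2c)` for `‖x - x₀‖ < δ`.
If `x₁` satisfies `‖x₁ - x₀‖ < δ/8` and `‖f(x₁)‖ < δ/(4c)`, then there is a
unique `x` with `f(x) = 0`, `x - x₁ ∈ range Q` and `‖x - x₀‖ < δ`; moreover
`‖x - x₁‖ ≤ 2c ‖f(x₁)‖`. -/
theorem newton_picard_zero_detection
    {X Y : Type*} [NormedAddCommGroup X] [NormedSpace ℝ X] [CompleteSpace X]
    [NormedAddCommGroup Y] [NormedSpace ℝ Y] [CompleteSpace Y]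
    (U : Set X) (hU : IsOpen U)
    (f : X → Y) (f' : X → X →L[ℝ] Y)
    (hf : ∀ x ∈ U, HasFDerivAt f (f' x) x)
    (hf'cont : ContinuousOn f' U)
    (x₀ : X) (hx₀ : x₀ ∈ U)
    (Q : Y →L[ℝ] X)
    (hQ : (f' x₀).comp Q = ContinuousLinearMap.id ℝ Y)
    (δ c : ℝ) (hδ : 0 < δ) (hc : 0 < c)
    (hQnorm : ‖Q‖ ≤ c)
    (hball : Metric.ball x₀ δ ⊆ U)
    (hsmall : ∀ x : X, ‖x - x₀‖ < δ → ‖f' x - f' x₀‖ ≤ 1 / (2 * c))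
    (x₁ : X) (h₁ : ‖x₁ - x₀‖ < δ / 8) (h₂ : ‖f x₁‖ < δ / (4 * c)) :
    ∃ x : X,
      (f x = 0 ∧ x - x₁ ∈ Set.range Q ∧ ‖x - x₀‖ < δ ∧ ‖x - x₁‖ ≤ 2 * c * ‖f x₁‖) ∧
      ∀ x' : X, f x' = 0 → x' - x₁ ∈ Set.range Q → ‖x' - x₀‖ < δ → x' = x := by
  have hDQ : ∀ y : Y, (f' x₀) (Q y) = y := by
    intro y
    have := ContinuousLinearMap.ext_iff.mp hQ y
    simpa using this
  have hQle : ∀ y : Y, ‖Q y‖ ≤ c * ‖y‖ := fun y =>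
    (Q.le_opNorm y).trans (mul_le_mul_of_nonneg_right hQnorm (norm_nonneg _))
  -- key mean value estimate
  have key : ∀ a ∈ Metric.ball x₀ δ, ∀ b ∈ Metric.ball x₀ δ,
      ‖f b - f a - (f' x₀) (b - a)‖ ≤ 1 / (2 * c) * ‖b - a‖ := by
    intro a ha b hb
    have := Convex.norm_image_sub_le_of_norm_hasFDerivWithin_le
      (f := fun x => f x - (f' x₀) x) (f' := fun x => f' x - f' x₀)
      (s := Metric.ball x₀ δ) (C := 1 / (2 * c))
      (fun x hx => (((hf x (hball hx)).sub ((f' x₀).hasFDerivAt)).hasFDerivWithinAt))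
      (fun x hx => hsmall x (by rwa [← dist_eq_norm, ← Metric.mem_ball]))
      (convex_ball x₀ δ) ha hb
    have heq : f b - (f' x₀) b - (f a - (f' x₀) a) = f b - f a - (f' x₀) (b - a) := by
      rw [map_sub]; abel
    rwa [heq] at this
  -- contraction estimate
  have step : ∀ y y' : Y, x₁ + Q y ∈ Metric.ball x₀ δ → x₁ + Q y' ∈ Metric.ball x₀ δ →
      ‖(y - f (x₁ + Q y)) - (y' - f (x₁ + Q y'))‖ ≤ 1 / 2 * ‖y - y'‖ := by
    intro y y' hy hy'
    have hd : (x₁ + Q y) - (x₁ + Q y') = Q (y - y') := by rw [map_sub]; abel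
    have h := key (x₁ + Q y') hy' (x₁ + Q y) hy
    rw [hd, hDQ] at h
    have h2 : ‖f (x₁ + Q y) - f (x₁ + Q y') - (y - y')‖ ≤ 1 / (2 * c) * (c * ‖y - y'‖) := by
      refine h.trans ?_
      exact mul_le_mul_of_nonneg_left (hQle _) (by positivity)
    have heq : (y - f (x₁ + Q y)) - (y' - f (x₁ + Q y')) =
        -(f (x₁ + Q y) - f (x₁ + Q y') - (y - y')) := by abel
    rw [heq, norm_neg]
    refine h2.trans (le_of_eq ?_)
    field_simp
  have hfx₁ : 2 * c * ‖f x₁‖ < δ / 2 := by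
    have := (mul_lt_mul_of_pos_left h₂ (by positivity : (0:ℝ) < 2 * c))
    calc 2 * c * ‖f x₁‖ < 2 * c * (δ / (4 * c)) := this
      _ = δ / 2 := by field_simp; ring
  have hmem : ∀ y : Y, ‖y‖ ≤ 2 * ‖f x₁‖ → x₁ + Q y ∈ Metric.ball x₀ δ := by
    intro y hy
    rw [Metric.mem_ball, dist_eq_norm]
    have : x₁ + Q y - x₀ = (x₁ - x₀) + Q y := by abel
    rw [this]
    have hQy : ‖Q y‖ ≤ c * (2 * ‖f x₁‖) :=
      (hQle y).trans (mul_le_mul_of_nonneg_left hy hc.le)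
    calc ‖(x₁ - x₀) + Q y‖ ≤ ‖x₁ - x₀‖ + ‖Q y‖ := norm_add_le _ _
      _ < δ / 8 + c * (2 * ‖f x₁‖) := by linarith [hQy]
      _ < δ := by nlinarith
  have hx₁ball : x₁ ∈ Metric.ball x₀ δ := by
    rw [Metric.mem_ball, dist_eq_norm]; linarith
  -- set up the contraction on the closed ball
  set F : Y → Y := fun y => y - f (x₁ + Q y) with hF
  set s : Set Y := Metric.closedBall 0 (2 * ‖f x₁‖) with hs
  have hmem' : ∀ y ∈ s, ‖y‖ ≤ 2 * ‖f x₁‖ := by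
    intro y hy; rwa [hs, Metric.mem_closedBall, dist_zero_right] at hy
  have hF0 : F 0 = -(f x₁) := by simp [hF]
  have hmaps : Set.MapsTo F s s := by
    intro y hy
    have hy' := hmem' y hy
    have hb : x₁ + Q y ∈ Metric.ball x₀ δ := hmem y hy'
    have hb0 : x₁ + Q (0:Y) ∈ Metric.ball x₀ δ := hmem 0 (by simp)
    have := step y 0 hb hb0
    rw [Metric.mem_closedBall, dist_zero_right]
    have h0 : F y = (F y - F 0) + F 0 := by abel
    calc ‖F y‖ = ‖(F y - F 0) + F 0‖ := by rw [← h0]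
      _ ≤ ‖F y - F 0‖ + ‖F 0‖ := norm_add_le _ _
      _ ≤ 1 / 2 * ‖y - 0‖ + ‖f x₁‖ := by
          rw [hF0, norm_neg]
          exact add_le_add (by simpa [hF] using this) le_rfl
      _ ≤ 2 * ‖f x₁‖ := by rw [sub_zero]; linarith
  have hcontr : ContractingWith (1/2 : NNReal) (hmaps.restrict F s s) := by
    constructor
    · exact_mod_cast (one_half_lt_one : (1/2 : NNReal) < 1)
    · apply LipschitzWith.of_dist_le_mul
      rintro ⟨y, hy⟩ ⟨y', hy'⟩
      have hb := hmem y (hmem' y hy)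
      have hb' := hmem y' (hmem' y' hy')
      have := step y y' hb hb'
      simp only [Set.MapsTo.restrict, Subtype.dist_eq, Subtype.map_coe, dist_eq_norm]
      push_cast
      simpa [hF] using this
  obtain ⟨y, hys, hfy, -, -⟩ := ContractingWith.exists_fixedPoint'
    (Metric.isClosed_closedBall.isComplete) hmaps hcontr
    (Metric.mem_closedBall_self (by positivity) : (0:Y) ∈ s) (edist_ne_top _ _)
  -- the zero
  have hyle : ‖y‖ ≤ 2 * ‖f x₁‖ := hmem' y hys
  have hzero : f (x₁ + Q y) = 0 := by
    have : y - f (x₁ + Q y) = y := hfy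
    have := sub_eq_self.mp this
    exact this
  refine ⟨x₁ + Q y, ⟨hzero, ⟨y, by abel⟩, ?_, ?_⟩, ?_⟩
  · have := hmem y hyle
    rwa [Metric.mem_ball, dist_eq_norm] at this
  · have : x₁ + Q y - x₁ = Q y := by abel
    rw [this]
    calc ‖Q y‖ ≤ c * ‖y‖ := hQle y
      _ ≤ c * (2 * ‖f x₁‖) := mul_le_mul_of_nonneg_left hyle hc.le
      _ = 2 * c * ‖f x₁‖ := by ring
  -- uniqueness
  · rintro x' hx'0 ⟨y', hy'⟩ hx'ball
    have hxball : x₁ + Q y ∈ Metric.ball x₀ δ := hmem y hyle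
    have hx'b : x' ∈ Metric.ball x₀ δ := by
      rw [Metric.mem_ball, dist_eq_norm]; exact hx'ball
    have h := key x' hx'b (x₁ + Q y) hxball
    rw [hzero, hx'0] at h
    have hdiff : (x₁ + Q y) - x' = Q (y - y') := by
      rw [map_sub, hy']; abel
    rw [hdiff, hDQ] at h
    have h2 : ‖y - y'‖ ≤ 1 / (2 * c) * (c * ‖y - y'‖) := by
      simp only [sub_self, zero_sub, norm_neg] at h
      refine h.trans ?_
      exact mul_le_mul_of_nonneg_left (hQle _) (by positivity)
    have h3 : 1 / (2 * c) * (c * ‖y - y'‖) = 1 / 2 * ‖y - y'‖ := by field_simp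
    rw [h3] at h2
    have : ‖y - y'‖ = 0 := by linarith [norm_nonneg (y - y')]
    have hyy : y - y' = 0 := norm_eq_zero.mp this
    have : (x₁ + Q y) - x' = 0 := by rw [hdiff, hyy, map_zero]
    exact (sub_eq_zero.mp this).symm
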